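/- Let G and G' be simple graphs on vertex set {1,…,p} with edge sets E and E' respectively. Then the Kullback–Leibler divergence between the corresponding Ising distributions satisfies D(P_G‖P_{G'}) ≤ Σ_{(i,j)∈E\E'} λ·(E_G[X_i X_j] − E_{G'}[X_i X_j]) + Σ_{(i,j)∈E'\E} λ·(E_{G'}[X_i X_j] − E_G[X_i X_j]). -/

import Mathlib

open Real Finset
open scoped Classical

noncomputable section

/-- Value of a spin: `true ↦ +1`, `false ↦ -1`. -/
def confVal (b : Bool) : ℝ := if b then 1 else -1

/-- The Ising interaction `∑_{{i,j}∈E} x_i x_j` (each edge counted once). -/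
def isingEnergy {p : ℕ} (G : SimpleGraph (Fin p)) (x : Fin p → Bool) : ℝ :=
  (1 / 2) * ∑ i : Fin p, ∑ j : Fin p,
    if G.Adj i j then confVal (x i) * confVal (x j) else 0

/-- The partition function `Z_G`. -/
def isingZ {p : ℕ} (lam : ℝ) (G : SimpleGraph (Fin p)) : ℝ :=
  ∑ x : Fin p → Bool, Real.exp (lam * isingEnergy G x)

/-- The ferromagnetic Ising distribution `P_G(x)`. -/
def isingP {p : ℕ} (lam : ℝ) (G : SimpleGraph (Fin p)) (x : Fin p → Bool) : ℝ :=
  Real.exp (lam * isingEnergy G x) / isingZ lam G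

/-- Kullback–Leibler divergence `D(P_G ‖ P_{G'})`. -/
def isingKL {p : ℕ} (lam : ℝ) (G G' : SimpleGraph (Fin p)) : ℝ :=
  ∑ x : Fin p → Bool, isingP lam G x * Real.log (isingP lam G x / isingP lam G' x)

/-- The correlation `E_G[X_i X_j]`. -/
def isingCorr {p : ℕ} (lam : ℝ) (G : SimpleGraph (Fin p)) (i j : Fin p) : ℝ :=
  ∑ x : Fin p → Bool, isingP lam G x * (confVal (x i) * confVal (x j))

/-- Probability of an event under `P_G`. -/
def eventProb {p : ℕ} (lam : ℝ) (G : SimpleGraph (Fin p)) (S : Set (Fin p → Bool)) : ℝ :=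
  ∑ x : Fin p → Bool, if x ∈ S then isingP lam G x else 0

/-- `P_G[X_i = X_j]`. -/
def isingProbEq {p : ℕ} (lam : ℝ) (G : SimpleGraph (Fin p)) (i j : Fin p) : ℝ :=
  eventProb lam G {x | x i = x j}

/-- The edge set of `G` as a `Finset`. -/
def edgeFin {p : ℕ} (G : SimpleGraph (Fin p)) : Finset (Sym2 (Fin p)) :=
  (Set.toFinite G.edgeSet).toFinset

/-- The edit distance `|E Δ E'|` between two graphs. -/
def editDist {p : ℕ} (G G' : SimpleGraph (Fin p)) : ℕ :=
  ((edgeFin G \ edgeFin G') ∪ (edgeFin G' \ edgeFin G)).card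

/-- The correlation `E_G[X_i X_j]` as a function of the unordered pair `{i,j}`. -/
def corrSym2 {p : ℕ} (lam : ℝ) (G : SimpleGraph (Fin p)) : Sym2 (Fin p) → ℝ :=
  Sym2.lift ⟨fun i j => isingCorr lam G i j, fun i j => by
    unfold isingCorr
    exact Finset.sum_congr rfl fun x _ => by ring⟩

/- ### Auxiliary definitions and lemmas -/

/-- The product of spins as a function of the unordered pair. -/
def pairVal {p : ℕ} (x : Fin p → Bool) : Sym2 (Fin p) → ℝ :=
  Sym2.lift ⟨fun i j => confVal (x i) * confVal (x j), fun i j => by ring⟩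

lemma mem_edgeFin {p : ℕ} {G : SimpleGraph (Fin p)} {e : Sym2 (Fin p)} :
    e ∈ edgeFin G ↔ e ∈ G.edgeSet := Set.Finite.mem_toFinset _

lemma double_sum_eq {p : ℕ} (G : SimpleGraph (Fin p)) (x : Fin p → Bool) :
    ∑ i : Fin p, ∑ j : Fin p,
      (if G.Adj i j then confVal (x i) * confVal (x j) else 0)
      = ∑ e ∈ edgeFin G, 2 * pairVal x e := by
  rw [← Finset.sum_product', ← Finset.sum_filter]
  set T : Finset (Fin p × Fin p) := (univ ×ˢ univ).filter (fun q => G.Adj q.1 q.2) with hT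
  have hmaps : ∀ q ∈ T, s(q.1, q.2) ∈ edgeFin G := by
    intro q hq
    rw [mem_edgeFin]
    simp only [hT, Finset.mem_filter] at hq
    exact hq.2
  rw [← Finset.sum_fiberwise_of_maps_to hmaps (fun q => confVal (x q.1) * confVal (x q.2))]
  refine Finset.sum_congr rfl fun e he => ?_
  rw [mem_edgeFin] at he
  induction e with
  | _ v w =>
    have hadj : G.Adj v w := he
    have hne : v ≠ w := hadj.ne
    have hfib : T.filter (fun q => s(q.1, q.2) = s(v, w)) = {(v, w), (w, v)} := by
      ext q
      simp only [hT, Finset.mem_filter, Finset.mem_product, Finset.mem_univ, true_and,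
        Finset.mem_insert, Finset.mem_singleton, Sym2.eq_iff]
      constructor
      · rintro ⟨-, (⟨h1, h2⟩ | ⟨h1, h2⟩)⟩
        · left; exact Prod.ext h1 h2
        · right; exact Prod.ext h1 h2
      · rintro (rfl | rfl)
        · exact ⟨hadj, Or.inl ⟨rfl, rfl⟩⟩
        · exact ⟨hadj.symm, Or.inr ⟨rfl, rfl⟩⟩
    rw [hfib]
    rw [Finset.sum_insert (by simp [hne]), Finset.sum_singleton]
    simp only [pairVal, Sym2.lift_mk]
    ring

lemma energy_eq_edge_sum {p : ℕ} (G : SimpleGraph (Fin p)) (x : Fin p → Bool) :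
    isingEnergy G x = ∑ e ∈ edgeFin G, pairVal x e := by
  unfold isingEnergy
  rw [double_sum_eq, Finset.mul_sum]
  exact Finset.sum_congr rfl fun e _ => by ring

lemma isingZ_pos {p : ℕ} (lam : ℝ) (G : SimpleGraph (Fin p)) : 0 < isingZ lam G :=
  Finset.sum_pos (fun _ _ => Real.exp_pos _) Finset.univ_nonempty

lemma isingP_pos {p : ℕ} (lam : ℝ) (G : SimpleGraph (Fin p)) (x : Fin p → Bool) :
    0 < isingP lam G x := div_pos (Real.exp_pos _) (isingZ_pos lam G)

lemma isingP_sum {p : ℕ} (lam : ℝ) (G : SimpleGraph (Fin p)) :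
    ∑ x : Fin p → Bool, isingP lam G x = 1 := by
  unfold isingP
  rw [← Finset.sum_div]
  exact div_self (isingZ_pos lam G).ne'

lemma log_ratio {p : ℕ} (lam : ℝ) (G G' : SimpleGraph (Fin p)) (x : Fin p → Bool) :
    Real.log (isingP lam G x / isingP lam G' x)
      = lam * (isingEnergy G x - isingEnergy G' x)
        + Real.log (isingZ lam G' / isingZ lam G) := by
  have hZ := isingZ_pos lam G
  have hZ' := isingZ_pos lam G'
  have : isingP lam G x / isingP lam G' x
      = Real.exp (lam * (isingEnergy G x - isingEnergy G' x)) * (isingZ lam G' / isingZ lam G) := by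
    unfold isingP
    rw [mul_sub, Real.exp_sub]
    field_simp
  rw [this, Real.log_mul (Real.exp_pos _).ne' (by positivity), Real.log_exp]

lemma isingKL_eq {p : ℕ} (lam : ℝ) (G G' : SimpleGraph (Fin p)) :
    isingKL lam G G'
      = lam * ∑ x : Fin p → Bool, isingP lam G x * (isingEnergy G x - isingEnergy G' x)
        + Real.log (isingZ lam G' / isingZ lam G) := by
  unfold isingKL
  have : ∀ x : Fin p → Bool, isingP lam G x * Real.log (isingP lam G x / isingP lam G' x)
      = lam * (isingP lam G x * (isingEnergy G x - isingEnergy G' x))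
        + Real.log (isingZ lam G' / isingZ lam G) * isingP lam G x := by
    intro x; rw [log_ratio]; ring
  rw [Finset.sum_congr rfl fun x _ => this x, Finset.sum_add_distrib, ← Finset.mul_sum,
    ← Finset.mul_sum, isingP_sum, mul_one]

lemma isingKL_nonneg {p : ℕ} (lam : ℝ) (G G' : SimpleGraph (Fin p)) :
    0 ≤ isingKL lam G G' := by
  unfold isingKL
  have h : ∀ x : Fin p → Bool, isingP lam G x - isingP lam G' x
      ≤ isingP lam G x * Real.log (isingP lam G x / isingP lam G' x) := by
    intro x
    have hP := isingP_pos lam G x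
    have hQ := isingP_pos lam G' x
    have hlog : Real.log (isingP lam G' x / isingP lam G x)
        ≤ isingP lam G' x / isingP lam G x - 1 :=
      Real.log_le_sub_one_of_pos (by positivity)
    have hrw : Real.log (isingP lam G x / isingP lam G' x)
        = - Real.log (isingP lam G' x / isingP lam G x) := by
      rw [← Real.log_inv, inv_div]
    rw [hrw, mul_neg]
    have hmul := mul_le_mul_of_nonneg_left hlog hP.le
    have hfield : isingP lam G x * (isingP lam G' x / isingP lam G x - 1)
        = isingP lam G' x - isingP lam G x := by
      field_simp
    linarith
  calc (0:ℝ) = ∑ x : Fin p → Bool, (isingP lam G x - isingP lam G' x) := by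
        rw [Finset.sum_sub_distrib, isingP_sum, isingP_sum, sub_self]
    _ ≤ _ := Finset.sum_le_sum fun x _ => h x

lemma sum_sdiff_pair {p : ℕ} (A B : Finset (Sym2 (Fin p))) (f : Sym2 (Fin p) → ℝ) :
    (∑ e ∈ A, f e) - ∑ e ∈ B, f e = (∑ e ∈ A \ B, f e) - ∑ e ∈ B \ A, f e := by
  have key : ∀ (C D : Finset (Sym2 (Fin p))),
      ∑ e ∈ C, f e = (∑ e ∈ C \ D, f e) + ∑ e ∈ C ∩ D, f e := by
    intro C D
    have h := Finset.sum_sdiff (f := f) (Finset.inter_subset_left (s₁ := C) (s₂ := D))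
    rw [Finset.sdiff_inter_self_left] at h
    linarith
  have h1 := key A B
  have h2 := key B A
  rw [Finset.inter_comm B A] at h2
  rw [h1, h2]
  ring

lemma corrSym2_eq {p : ℕ} (lam : ℝ) (G : SimpleGraph (Fin p)) (e : Sym2 (Fin p)) :
    corrSym2 lam G e = ∑ x : Fin p → Bool, isingP lam G x * pairVal x e := by
  induction e with
  | _ i j =>
    simp only [corrSym2, pairVal, Sym2.lift_mk]
    rfl

set_option maxHeartbeats 1000000 in
/-- KL divergence bound in terms of correlation differences over
the edges of the symmetric difference. -/
theorem kl_le_corr_diff {p : ℕ} (lam : ℝ) (hlam : 0 < lam)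
    (G G' : SimpleGraph (Fin p)) :
    isingKL lam G G' ≤
      (∑ e ∈ edgeFin G \ edgeFin G', lam * (corrSym2 lam G e - corrSym2 lam G' e)) +
      (∑ e ∈ edgeFin G' \ edgeFin G, lam * (corrSym2 lam G' e - corrSym2 lam G e)) := by
  set D1 := edgeFin G \ edgeFin G' with hD1
  set D2 := edgeFin G' \ edgeFin G with hD2
  -- energy difference over the symmetric difference
  have hdiff : ∀ x : Fin p → Bool, isingEnergy G x - isingEnergy G' x
      = (∑ e ∈ D1, pairVal x e) - ∑ e ∈ D2, pairVal x e := by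
    intro x
    rw [energy_eq_edge_sum, energy_eq_edge_sum, hD1, hD2]
    exact sum_sdiff_pair (edgeFin G) (edgeFin G') (pairVal x)
  -- abbreviations
  set S1 : (Fin p → Bool) → ℝ := fun x => ∑ e ∈ D1, pairVal x e with hS1
  set S2 : (Fin p → Bool) → ℝ := fun x => ∑ e ∈ D2, pairVal x e with hS2
  -- sums of correlations over D1 and D2
  have hcorr : ∀ (H : SimpleGraph (Fin p)) (D : Finset (Sym2 (Fin p))),
      ∑ e ∈ D, corrSym2 lam H e
        = ∑ x : Fin p → Bool, isingP lam H x * ∑ e ∈ D, pairVal x e := by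
    intro H D
    rw [Finset.sum_congr rfl fun e _ => corrSym2_eq lam H e, Finset.sum_comm]
    exact Finset.sum_congr rfl fun x _ => (Finset.mul_sum _ _ _).symm
  -- KL bound
  have hZ := isingZ_pos lam G
  have hZ' := isingZ_pos lam G'
  have hlogs : Real.log (isingZ lam G' / isingZ lam G)
      + Real.log (isingZ lam G / isingZ lam G') = 0 := by
    rw [← Real.log_mul (by positivity) (by positivity)]
    rw [show isingZ lam G' / isingZ lam G * (isingZ lam G / isingZ lam G') = 1 by
      field_simp]
    exact Real.log_one
  have hbound : isingKL lam G G' ≤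
      lam * ∑ x : Fin p → Bool, isingP lam G x * (isingEnergy G x - isingEnergy G' x)
      + lam * ∑ x : Fin p → Bool, isingP lam G' x * (isingEnergy G' x - isingEnergy G x) := by
    have := isingKL_nonneg lam G' G
    have e1 := isingKL_eq lam G G'
    have e2 := isingKL_eq lam G' G
    linarith
  refine hbound.trans (le_of_eq ?_)
  have hA : ∑ x : Fin p → Bool, isingP lam G x * (isingEnergy G x - isingEnergy G' x)
      = (∑ x : Fin p → Bool, isingP lam G x * S1 x)
        - ∑ x : Fin p → Bool, isingP lam G x * S2 x := by
    rw [← Finset.sum_sub_distrib]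
    exact Finset.sum_congr rfl fun x _ => by rw [hdiff x]; simp only [hS1, hS2]; ring
  have hB : ∑ x : Fin p → Bool, isingP lam G' x * (isingEnergy G' x - isingEnergy G x)
      = (∑ x : Fin p → Bool, isingP lam G' x * S2 x)
        - ∑ x : Fin p → Bool, isingP lam G' x * S1 x := by
    rw [← Finset.sum_sub_distrib]
    refine Finset.sum_congr rfl fun x _ => ?_
    have : isingEnergy G' x - isingEnergy G x = S2 x - S1 x := by
      have := hdiff x; simp only [hS1, hS2] at *; linarith
    rw [this]; ring
  have hR1 : ∑ e ∈ D1, lam * (corrSym2 lam G e - corrSym2 lam G' e)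
      = lam * ((∑ x : Fin p → Bool, isingP lam G x * S1 x)
          - ∑ x : Fin p → Bool, isingP lam G' x * S1 x) := by
    rw [← Finset.mul_sum, Finset.sum_sub_distrib, hcorr G D1, hcorr G' D1]
  have hR2 : ∑ e ∈ D2, lam * (corrSym2 lam G' e - corrSym2 lam G e)
      = lam * ((∑ x : Fin p → Bool, isingP lam G' x * S2 x)
          - ∑ x : Fin p → Bool, isingP lam G x * S2 x) := by
    rw [← Finset.mul_sum, Finset.sum_sub_distrib, hcorr G' D2, hcorr G D2]
  rw [hA, hB, hR1, hR2]
  ring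

end
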